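/- Let M be a loopless matroid on a finite nonempty ground set E with rank function rk. For t ∈ ℝ, say a vector w ∈ ℝ^E lies in t·P(M) if 0 ≤ Σ_{e∈S} w_e ≤ t·rk(S) for every S ⊆ E and Σ_{e∈E} w_e = t·rk(E). Let m = max{ |S| / rk(S) : ∅ ≠ S ⊆ E }. Then: (a) there exists w ∈ m·P(M) with w_e ≥ 1 for all e ∈ E, and (b) for every t ∈ ℝ, if there exists w ∈ t·P(M) with w_e ≥ 1 for all e ∈ E, then t ≥ m. In particular, the infimum c(M) = inf{ t ∈ ℝ : ∃ w ∈ t·P(M) with w_e ≥ 1 for all e } equals m and is attained. -/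

import Mathlib

/-- Key lemma: if `m * rk S ≥ |S|` for all nonempty `S ⊆ E`, then there is a vector `w ≥ 1`
on `E` with `w(S) ≤ m * rk S` for all `S ⊆ E` and `w(E) = m * rk E`. -/
lemma key_lemma {α : Type*} [DecidableEq α] (m : ℝ) :
    ∀ (n : ℕ) (E : Finset α), E.card ≤ n → ∀ (rk : Finset α → ℕ),
    rk ∅ = 0 → (∀ S T : Finset α, S ⊆ T → rk S ≤ rk T) →
    (∀ S T : Finset α, rk (S ∪ T) + rk (S ∩ T) ≤ rk S + rk T) →
    (∀ S : Finset α, S ⊆ E → S.Nonempty → (S.card : ℝ) ≤ m * rk S) →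
    ∃ w : α → ℝ, (∀ e ∈ E, 1 ≤ w e) ∧ (∀ S : Finset α, S ⊆ E → ∑ e ∈ S, w e ≤ m * rk S) ∧
      (∑ e ∈ E, w e = m * rk E) := by
  intro n
  induction n with
  | zero =>
    intro E hE rk h0 hmono hsub hratio
    have hEempty : E = ∅ := Finset.card_eq_zero.mp (Nat.le_zero.mp hE)
    subst hEempty
    refine ⟨fun _ => 1, by simp, ?_, by simp [h0]⟩
    intro S hS
    have : S = ∅ := Finset.subset_empty.mp hS
    subst this
    simp [h0]
  | succ n ih =>
    intro E hE rk h0 hmono hsub hratio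
    rcases E.eq_empty_or_nonempty with rfl | hEne
    · refine ⟨fun _ => 1, by simp, ?_, by simp [h0]⟩
      intro S hS
      have : S = ∅ := Finset.subset_empty.mp hS
      subst this
      simp [h0]
    -- pick a maximizer A of |S| / rk S over nonempty S ⊆ E
    obtain ⟨e₀, he₀⟩ := hEne
    have hFne : ((E.powerset.filter (fun S => S.Nonempty))).Nonempty :=
      ⟨{e₀}, by simp [Finset.singleton_subset_iff.mpr he₀]⟩
    obtain ⟨A, hAmem, hAmax⟩ := Finset.exists_max_image
      (E.powerset.filter (fun S => S.Nonempty)) (fun S => (S.card : ℝ) / (rk S : ℝ)) hFne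
    have hAE : A ⊆ E := by
      have := (Finset.mem_filter.mp hAmem).1; exact Finset.mem_powerset.mp this
    have hAne : A.Nonempty := (Finset.mem_filter.mp hAmem).2
    have hrkpos : ∀ S : Finset α, S ⊆ E → S.Nonempty → 0 < rk S := by
      intro S hSE hSne
      rcases Nat.eq_zero_or_pos (rk S) with hz | h
      · exfalso
        have h1 := hratio S hSE hSne
        rw [hz] at h1
        norm_num at h1
        exact absurd h1 hSne.ne_empty
      · exact h
    have hrkApos : (0 : ℝ) < (rk A : ℝ) := by
      exact_mod_cast hrkpos A hAE hAne
    set m₀ : ℝ := (A.card : ℝ) / (rk A : ℝ) with hm₀def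
    have hm₀pos : 0 < m₀ := by
      apply div_pos _ hrkApos
      exact_mod_cast Finset.card_pos.mpr hAne
    have hAcard : (A.card : ℝ) = m₀ * rk A := by
      rw [hm₀def, div_mul_cancel₀ _ (ne_of_gt hrkApos)]
    have hm₀max : ∀ S : Finset α, S ⊆ E → S.Nonempty → (S.card : ℝ) ≤ m₀ * rk S := by
      intro S hSE hSne
      have hmem : S ∈ E.powerset.filter (fun S => S.Nonempty) := by
        simp [Finset.mem_powerset.mpr hSE, hSne]
      have h := hAmax S hmem
      have hrkS : (0 : ℝ) < (rk S : ℝ) := by exact_mod_cast hrkpos S hSE hSne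
      calc (S.card : ℝ) = (S.card : ℝ) / rk S * rk S := by rw [div_mul_cancel₀ _ (ne_of_gt hrkS)]
        _ ≤ m₀ * rk S := by
          apply mul_le_mul_of_nonneg_right h (le_of_lt hrkS)
    have hmm₀ : m₀ ≤ m := by
      have h1 := hratio A hAE hAne
      rw [hAcard] at h1
      exact le_of_mul_le_mul_right (by linarith) hrkApos
    have hmpos : 0 < m := lt_of_lt_of_le hm₀pos hmm₀
    -- contracted rank function
    set rk' : Finset α → ℕ := fun S => rk (S ∪ A) - rk A with hrk'def
    have hrk'sub_cast : ∀ S : Finset α, (rk' S : ℝ) = (rk (S ∪ A) : ℝ) - rk A := by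
      intro S
      have : rk A ≤ rk (S ∪ A) := hmono A (S ∪ A) Finset.subset_union_right
      rw [hrk'def]
      push_cast [Nat.cast_sub this]
      ring
    have h0' : rk' ∅ = 0 := by simp [hrk'def]
    have hmono' : ∀ S T : Finset α, S ⊆ T → rk' S ≤ rk' T := by
      intro S T hST
      exact Nat.sub_le_sub_right (hmono _ _ (Finset.union_subset_union_left hST)) _
    have hsub' : ∀ S T : Finset α, rk' (S ∪ T) + rk' (S ∩ T) ≤ rk' S + rk' T := by
      intro S T
      have h1 : rk ((S ∪ A) ∪ (T ∪ A)) + rk ((S ∪ A) ∩ (T ∪ A)) ≤ rk (S ∪ A) + rk (T ∪ A) :=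
        hsub _ _
      have he1 : (S ∪ A) ∪ (T ∪ A) = (S ∪ T) ∪ A := by
        ext x; simp [Finset.mem_union]; tauto
      have he2 : (S ∩ T) ∪ A ⊆ (S ∪ A) ∩ (T ∪ A) := by
        intro x hx
        simp only [Finset.mem_union, Finset.mem_inter] at hx ⊢
        tauto
      have h2 : rk ((S ∩ T) ∪ A) ≤ rk ((S ∪ A) ∩ (T ∪ A)) := hmono _ _ he2
      rw [he1] at h1
      have r1 : rk A ≤ rk ((S ∪ T) ∪ A) := hmono _ _ Finset.subset_union_right
      have r2 : rk A ≤ rk ((S ∩ T) ∪ A) := hmono _ _ Finset.subset_union_right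
      have r3 : rk A ≤ rk (S ∪ A) := hmono _ _ Finset.subset_union_right
      have r4 : rk A ≤ rk (T ∪ A) := hmono _ _ Finset.subset_union_right
      simp only [hrk'def]
      omega
    have hcard' : (E \ A).card ≤ n := by
      have h1 : (E \ A).card < E.card := Finset.card_lt_card (by
        refine Finset.ssubset_iff_of_subset (Finset.sdiff_subset) |>.mpr ?_
        obtain ⟨a, ha⟩ := hAne
        exact ⟨a, hAE ha, by simp [ha]⟩)
      omega
    have hratio' : ∀ S : Finset α, S ⊆ E \ A → S.Nonempty → (S.card : ℝ) ≤ m * rk' S := by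
      intro S hSE hSne
      have hdisj : Disjoint S A := Finset.disjoint_left.mpr (fun x hx =>
        (Finset.mem_sdiff.mp (hSE hx)).2)
      have hSA : S ∪ A ⊆ E := Finset.union_subset (hSE.trans Finset.sdiff_subset) hAE
      have hcardu : ((S ∪ A).card : ℝ) = S.card + A.card := by
        rw [Finset.card_union_of_disjoint hdisj]; push_cast; ring
      have h1 : ((S ∪ A).card : ℝ) ≤ m₀ * rk (S ∪ A) :=
        hm₀max _ hSA (hAne.mono Finset.subset_union_right)
      have hnn : (0 : ℝ) ≤ (rk (S ∪ A) : ℝ) - rk A := by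
        have : rk A ≤ rk (S ∪ A) := hmono A (S ∪ A) Finset.subset_union_right
        have : (rk A : ℝ) ≤ rk (S ∪ A) := by exact_mod_cast this
        linarith
      have h2 : (S.card : ℝ) ≤ m₀ * ((rk (S ∪ A) : ℝ) - rk A) := by
        rw [hcardu] at h1
        rw [hAcard] at h1
        linarith [h1]
      calc (S.card : ℝ) ≤ m₀ * ((rk (S ∪ A) : ℝ) - rk A) := h2
        _ ≤ m * ((rk (S ∪ A) : ℝ) - rk A) := mul_le_mul_of_nonneg_right hmm₀ hnn
        _ = m * rk' S := by rw [hrk'sub_cast]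
    obtain ⟨w', hw'1, hw'2, hw'3⟩ := ih (E \ A) hcard' rk' h0' hmono' hsub' hratio'
    -- assemble
    refine ⟨fun e => if e ∈ A then m / m₀ else w' e, ?_, ?_, ?_⟩
    · intro e heE
      by_cases heA : e ∈ A
      · simp only [heA, if_true]
        exact (one_le_div hm₀pos).mpr hmm₀
      · simp only [heA, if_false]
        exact hw'1 e (Finset.mem_sdiff.mpr ⟨heE, heA⟩)
    · intro S hSE
      have hsplit : ∑ e ∈ S, (if e ∈ A then m / m₀ else w' e)
          = (S ∩ A).card * (m / m₀) + ∑ e ∈ S \ A, w' e := by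
        rw [← Finset.sum_inter_add_sum_sdiff S A (fun e => if e ∈ A then m / m₀ else w' e)]
        have hc1 : ∑ e ∈ S ∩ A, (if e ∈ A then m / m₀ else w' e)
            = ((S ∩ A).card : ℝ) * (m / m₀) := by
          rw [Finset.sum_congr rfl (fun x hx => if_pos (Finset.mem_inter.mp hx).2),
            Finset.sum_const, nsmul_eq_mul]
        have hc2 : ∑ e ∈ S \ A, (if e ∈ A then m / m₀ else w' e) = ∑ e ∈ S \ A, w' e :=
          Finset.sum_congr rfl (fun x hx => if_neg (Finset.mem_sdiff.mp hx).2)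
        rw [hc1, hc2]
      rw [hsplit]
      -- bound first part
      have hb1 : ((S ∩ A).card : ℝ) * (m / m₀) ≤ m * rk (S ∩ A) := by
        rcases (S ∩ A).eq_empty_or_nonempty with he | hne
        · rw [he]; simp [h0]
        · have h1 : ((S ∩ A).card : ℝ) ≤ m₀ * rk (S ∩ A) :=
            hm₀max _ ((Finset.inter_subset_left).trans hSE) hne
          have h2 : ((S ∩ A).card : ℝ) * (m / m₀) ≤ (m₀ * rk (S ∩ A)) * (m / m₀) :=
            mul_le_mul_of_nonneg_right h1 (div_pos hmpos hm₀pos).le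
          have hne : m₀ ≠ 0 := ne_of_gt hm₀pos
          have h3 : (m₀ * (rk (S ∩ A) : ℝ)) * (m / m₀) = m * rk (S ∩ A) := by
            field_simp
          linarith
      -- bound second part
      have hb2 : ∑ e ∈ S \ A, w' e ≤ m * ((rk (S ∪ A) : ℝ) - rk A) := by
        have hsub' : S \ A ⊆ E \ A := Finset.sdiff_subset_sdiff hSE (le_refl _)
        have := hw'2 (S \ A) hsub'
        rwa [hrk'sub_cast, Finset.sdiff_union_self_eq_union] at this
      have hsubm : (rk (S ∪ A) : ℝ) + rk (S ∩ A) ≤ rk S + rk A := by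
        exact_mod_cast hsub S A
      nlinarith [hb1, hb2, hsubm, le_of_lt hmpos]
    · have hsplit : ∑ e ∈ E, (if e ∈ A then m / m₀ else w' e)
          = (A.card : ℝ) * (m / m₀) + ∑ e ∈ E \ A, w' e := by
        rw [← Finset.sum_inter_add_sum_sdiff E A (fun e => if e ∈ A then m / m₀ else w' e)]
        have hEA : E ∩ A = A := Finset.inter_eq_right.mpr hAE
        have hc1 : ∑ e ∈ E ∩ A, (if e ∈ A then m / m₀ else w' e)
            = (A.card : ℝ) * (m / m₀) := by
          rw [hEA, Finset.sum_congr rfl (fun x hx => if_pos hx),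
            Finset.sum_const, nsmul_eq_mul]
        have hc2 : ∑ e ∈ E \ A, (if e ∈ A then m / m₀ else w' e) = ∑ e ∈ E \ A, w' e :=
          Finset.sum_congr rfl (fun x hx => if_neg (Finset.mem_sdiff.mp hx).2)
        rw [hc1, hc2]
      rw [hsplit, hw'3, hrk'sub_cast, Finset.sdiff_union_self_eq_union,
        Finset.union_eq_left.mpr hAE, hAcard]
      have hne : m₀ ≠ 0 := ne_of_gt hm₀pos
      field_simp
      ring

theorem stmt_6 {α : Type*} [Fintype α] [DecidableEq α] [Nonempty α]
    (rk : Finset α → ℕ)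
    (h0 : rk ∅ = 0)
    (hmono : ∀ S T : Finset α, S ⊆ T → rk S ≤ rk T)
    (hsub : ∀ S T : Finset α, rk (S ∪ T) + rk (S ∩ T) ≤ rk S + rk T)
    (hunit : ∀ (S : Finset α) (e : α), rk (insert e S) ≤ rk S + 1)
    (hloopless : ∀ e : α, rk {e} = 1)
    (m : ℝ)
    (hm : IsGreatest {r : ℝ | ∃ S : Finset α, S.Nonempty ∧ r = (S.card : ℝ) / (rk S : ℝ)} m) :
    IsLeast { t : ℝ | ∃ w : α → ℝ, (∀ e : α, 1 ≤ w e) ∧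
        (∀ S : Finset α, 0 ≤ ∑ e ∈ S, w e ∧ ∑ e ∈ S, w e ≤ t * (rk S : ℝ)) ∧
        (∑ e : α, w e = t * (rk Finset.univ : ℝ)) } m := by
  have hrkpos : ∀ S : Finset α, S.Nonempty → 0 < rk S := by
    intro S ⟨e, he⟩
    have h1 : rk {e} ≤ rk S := hmono _ _ (Finset.singleton_subset_iff.mpr he)
    rw [hloopless] at h1
    omega
  have hratio : ∀ S : Finset α, S ⊆ Finset.univ → S.Nonempty → (S.card : ℝ) ≤ m * rk S := by
    intro S _ hSne
    have hmem : (S.card : ℝ) / (rk S : ℝ) ∈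
        {r : ℝ | ∃ S : Finset α, S.Nonempty ∧ r = (S.card : ℝ) / (rk S : ℝ)} := ⟨S, hSne, rfl⟩
    have h := hm.2 hmem
    have hrkS : (0 : ℝ) < rk S := by exact_mod_cast hrkpos S hSne
    calc (S.card : ℝ) = (S.card : ℝ) / rk S * rk S := by field_simp
      _ ≤ m * rk S := mul_le_mul_of_nonneg_right h (le_of_lt hrkS)
  constructor
  · -- membership
    obtain ⟨w, hw1, hw2, hw3⟩ := key_lemma m (Finset.univ.card) Finset.univ (le_refl _)
      rk h0 hmono hsub hratio
    refine ⟨w, fun e => hw1 e (Finset.mem_univ e), fun S => ⟨?_, hw2 S (Finset.subset_univ S)⟩,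
      hw3⟩
    exact Finset.sum_nonneg (fun e _ => le_trans zero_le_one (hw1 e (Finset.mem_univ e)))
  · -- lower bound
    rintro t ⟨w, hw1, hw2, _⟩
    obtain ⟨S₀, hS₀ne, hS₀eq⟩ := hm.1
    have hrkS₀ : (0 : ℝ) < rk S₀ := by exact_mod_cast hrkpos S₀ hS₀ne
    have h1 : (S₀.card : ℝ) ≤ ∑ e ∈ S₀, w e := by
      calc (S₀.card : ℝ) = ∑ _e ∈ S₀, (1 : ℝ) := by simp
        _ ≤ ∑ e ∈ S₀, w e := Finset.sum_le_sum (fun e _ => hw1 e)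
    have h2 := (hw2 S₀).2
    rw [hS₀eq, div_le_iff₀ hrkS₀]
    linarith
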